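/- Any weak (p,q)-quasi-shuffle φ: {1,…,p+q} ↠ {1,…,s} admits a unique factorization φ = δ∘σ where σ: {1,…,p+q} ↠ {1,…,t} is a nondecreasing surjection with σ(p) < σ(p+1), and δ: {1,…,t} ↠ {1,…,s} is a (σ(p), t−σ(p))-quasi-shuffle. -/
import Mathlib


/-- `φ : {1,…,p+q} → {1,…,s}` is a weak `(p,q)`-quasi-shuffle: a surjection
which is nondecreasing on the first `p` positions and on the last `q`
positions (positions are `0`-indexed via `Fin`). -/
def IsWeakQSh (p q s : ℕ) (φ : Fin (p + q) → Fin s) : Prop :=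
  Function.Surjective φ ∧
  (∀ i j : Fin (p + q), i.val < j.val → j.val < p → φ i ≤ φ j) ∧
  (∀ i j : Fin (p + q), p ≤ i.val → i.val < j.val → φ i ≤ φ j)

/-- `δ : {1,…,p'+q'} → {1,…,s}` is a `(p',q')`-quasi-shuffle (here the first
block is described by a cut point `k = p'`): a surjection strictly
increasing on the first `k` positions and on the remaining ones. -/
def IsQShCut (t s k : ℕ) (δ : Fin t → Fin s) : Prop :=
  Function.Surjective δ ∧
  (∀ i j : Fin t, i.val < j.val → j.val < k → δ i < δ j) ∧
  (∀ i j : Fin t, k ≤ i.val → i.val < j.val → δ i < δ j)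

set_option maxHeartbeats 1000000

namespace QShAux

variable (p q s : ℕ) (φ : Fin (p + q) → Fin s)

/-- step indicator -/
def stepF (i : ℕ) : ℕ :=
  if _ : i + 1 = p then 1
  else if h : i + 1 < p + q then (if φ ⟨i, Nat.lt_of_succ_lt h⟩ = φ ⟨i+1, h⟩ then 0 else 1)
  else 0

def gfun : ℕ → ℕ
  | 0 => 0
  | i+1 => gfun i + stepF p q s φ i

variable {p q s φ}

lemma gfun_zero : gfun p q s φ 0 = 0 := rfl
lemma gfun_succ (i : ℕ) : gfun p q s φ (i+1) = gfun p q s φ i + stepF p q s φ i := rfl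

lemma stepF_le_one (i : ℕ) : stepF p q s φ i ≤ 1 := by
  unfold stepF
  split <;> try omega
  split
  · split <;> omega
  · omega

lemma stepF_p (hp : 0 < p) : stepF p q s φ (p-1) = 1 := by
  unfold stepF
  rw [dif_pos (by omega)]

lemma stepF_eq (i : ℕ) (h1 : i + 1 < p + q) (h2 : i + 1 ≠ p) :
    stepF p q s φ i = if φ ⟨i, by omega⟩ = φ ⟨i+1, h1⟩ then 0 else 1 := by
  unfold stepF
  rw [dif_neg h2, dif_pos h1]

lemma gfun_mono {i j : ℕ} (h : i ≤ j) : gfun p q s φ i ≤ gfun p q s φ j := by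
  induction j with
  | zero => have : i = 0 := by omega
            subst this; exact le_refl _
  | succ n ih =>
    rcases Nat.lt_or_ge i (n+1) with h' | h'
    · have := ih (by omega)
      rw [gfun_succ]; omega
    · have : i = n + 1 := by omega
      subst this; exact le_refl _

lemma gfun_p (hp : 0 < p) : gfun p q s φ p = gfun p q s φ (p-1) + 1 := by
  have h2 := gfun_succ (p := p) (q := q) (s := s) (φ := φ) (p-1)
  rw [show p - 1 + 1 = p from by omega] at h2
  rw [h2, stepF_p hp]

lemma gfun_attain {m v : ℕ} (h : v ≤ gfun p q s φ m) : ∃ i ≤ m, gfun p q s φ i = v := by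
  induction m with
  | zero => exact ⟨0, le_refl _, by rw [gfun_zero] at h ⊢; omega⟩
  | succ n ih =>
    rcases le_or_gt v (gfun p q s φ n) with h' | h'
    · obtain ⟨i, hi, hiv⟩ := ih h'
      exact ⟨i, by omega, hiv⟩
    · refine ⟨n+1, le_refl _, ?_⟩
      have := stepF_le_one (p := p) (q := q) (s := s) (φ := φ) n
      rw [gfun_succ] at h ⊢
      omega

/-- φ is constant on gfun-fibers -/
lemma phi_eq_of_gfun_eq (hφ : IsWeakQSh p q s φ) {i j : ℕ} (hij : i ≤ j) (hj : j < p + q)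
    (hg : gfun p q s φ i = gfun p q s φ j) : φ ⟨i, by omega⟩ = φ ⟨j, hj⟩ := by
  obtain ⟨d, rfl⟩ := Nat.exists_eq_add_of_le hij
  induction d with
  | zero => rfl
  | succ n ih =>
    have h1 : gfun p q s φ i ≤ gfun p q s φ (i + n) := gfun_mono (by omega)
    have h2 : gfun p q s φ (i+n) ≤ gfun p q s φ (i + n + 1) := gfun_mono (by omega)
    show φ ⟨i, by omega⟩ = φ ⟨i + n + 1, by omega⟩
    have hg : gfun p q s φ i = gfun p q s φ (i + n + 1) := hg
    have hj : i + n + 1 < p + q := hj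
    have hgn : gfun p q s φ i = gfun p q s φ (i + n) := by omega
    have hstep : stepF p q s φ (i + n) = 0 := by
      have := gfun_succ (p := p) (q := q) (s := s) (φ := φ) (i + n); omega
    have hnp : i + n + 1 ≠ p := by
      intro hc
      have hppos : 0 < p := by omega
      have h5 := stepF_p (p := p) (q := q) (s := s) (φ := φ) hppos
      rw [show p - 1 = i + n from by omega] at h5
      omega
    rw [stepF_eq (i+n) hj hnp] at hstep
    have hphi : φ ⟨i+n, by omega⟩ = φ ⟨i+n+1, hj⟩ := by
      by_contra hne
      rw [if_neg hne] at hstep; omega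
    have := ih (by omega) (by omega) hgn
    rw [this, hphi]

/-- gfun is constant on φ-plateaus in the first block -/
lemma gfun_eq_of_phi_eq_first (hφ : IsWeakQSh p q s φ) {i j : ℕ} (hij : i ≤ j) (hj : j < p)
    (hphi : φ ⟨i, by omega⟩ = φ ⟨j, by omega⟩) : gfun p q s φ i = gfun p q s φ j := by
  obtain ⟨d, rfl⟩ := Nat.exists_eq_add_of_le hij
  induction d with
  | zero => rfl
  | succ n ih =>
    show gfun p q s φ i = gfun p q s φ (i + n + 1)
    have hj' : i + n + 1 < p := hj
    have hi0 : i < p + q := by omega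
    have hin : i + n < p + q := by omega
    have hin1 : i + n + 1 < p + q := by omega
    have hphi' : φ ⟨i, hi0⟩ = φ ⟨i + n + 1, hin1⟩ := hphi
    have hle1 : φ (⟨i, hi0⟩ : Fin (p+q)) ≤ φ ⟨i+n, hin⟩ := by
      rcases Nat.eq_or_lt_of_le (Nat.le_add_right i n) with h | h
      · exact le_of_eq (congrArg φ (Fin.ext h))
      · exact hφ.2.1 ⟨i, hi0⟩ ⟨i+n, hin⟩ h (show i + n < p by omega)
    have hle2 : φ (⟨i+n, hin⟩ : Fin (p+q)) ≤ φ ⟨i+n+1, hin1⟩ :=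
      hφ.2.1 ⟨i+n, hin⟩ ⟨i+n+1, hin1⟩ (show i + n < i + n + 1 by omega) (show i + n + 1 < p by omega)
    have heq1 : φ (⟨i, hi0⟩ : Fin (p+q)) = φ ⟨i+n, hin⟩ :=
      le_antisymm hle1 (hphi' ▸ hle2)
    have heq2 : φ (⟨i+n, hin⟩ : Fin (p+q)) = φ ⟨i+n+1, hin1⟩ :=
      heq1 ▸ hphi'
    have hrec := ih (by omega) (by omega) heq1
    rw [gfun_succ, stepF_eq (i+n) hin1 (by omega), if_pos heq2]
    omega

/-- gfun is constant on φ-plateaus in the second block -/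
lemma gfun_eq_of_phi_eq_second (hφ : IsWeakQSh p q s φ) {i j : ℕ} (hpi : p ≤ i) (hij : i ≤ j)
    (hj : j < p + q)
    (hphi : φ ⟨i, by omega⟩ = φ ⟨j, hj⟩) : gfun p q s φ i = gfun p q s φ j := by
  obtain ⟨d, rfl⟩ := Nat.exists_eq_add_of_le hij
  induction d with
  | zero => rfl
  | succ n ih =>
    show gfun p q s φ i = gfun p q s φ (i + n + 1)
    have hj' : i + n + 1 < p + q := hj
    have hi0 : i < p + q := by omega
    have hin : i + n < p + q := by omega
    have hin1 : i + n + 1 < p + q := hj'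
    have hphi' : φ ⟨i, hi0⟩ = φ ⟨i + n + 1, hin1⟩ := hphi
    have hle1 : φ (⟨i, hi0⟩ : Fin (p+q)) ≤ φ ⟨i+n, hin⟩ := by
      rcases Nat.eq_or_lt_of_le (Nat.le_add_right i n) with h | h
      · exact le_of_eq (congrArg φ (Fin.ext h))
      · exact hφ.2.2 ⟨i, hi0⟩ ⟨i+n, hin⟩ (show p ≤ i from hpi) (show i < i + n from h)
    have hle2 : φ (⟨i+n, hin⟩ : Fin (p+q)) ≤ φ ⟨i+n+1, hin1⟩ :=
      hφ.2.2 ⟨i+n, hin⟩ ⟨i+n+1, hin1⟩ (show p ≤ i + n by omega) (show i + n < i + n + 1 by omega)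
    have heq1 : φ (⟨i, hi0⟩ : Fin (p+q)) = φ ⟨i+n, hin⟩ :=
      le_antisymm hle1 (hphi' ▸ hle2)
    have heq2 : φ (⟨i+n, hin⟩ : Fin (p+q)) = φ ⟨i+n+1, hin1⟩ :=
      heq1 ▸ hphi'
    have hrec := ih (by omega) (by omega) heq1
    rw [gfun_succ, stepF_eq (i+n) hin1 (by omega), if_pos heq2]
    omega


variable (p q s φ)

def tF : ℕ := gfun p q s φ (p + q - 1) + 1

def sigmaF : Fin (p + q) → Fin (tF p q s φ) := fun i =>
  ⟨gfun p q s φ i.val, by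
    have h1 := i.isLt
    have h2 := gfun_mono (p := p) (q := q) (s := s) (φ := φ) (show i.val ≤ p + q - 1 by omega)
    unfold tF; omega⟩

lemma deltaF_ex (hpq : 0 < p + q) (v : Fin (tF p q s φ)) :
    ∃ i, i < p + q ∧ gfun p q s φ i = v.val := by
  have hv : v.val ≤ gfun p q s φ (p + q - 1) := by
    have := v.isLt; unfold tF at this; omega
  obtain ⟨i, hi, he⟩ := gfun_attain hv
  exact ⟨i, by omega, he⟩

noncomputable def deltaF (hpq : 0 < p + q) : Fin (tF p q s φ) → Fin s := fun v =>
  have hex := (deltaF_ex p q s φ hpq v).choose_spec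
  φ ⟨(deltaF_ex p q s φ hpq v).choose, hex.1⟩

variable {p q s φ}

lemma phi_eq_of_gfun_eq' (hφ : IsWeakQSh p q s φ) {i j : ℕ} (hi : i < p + q) (hj : j < p + q)
    (hg : gfun p q s φ i = gfun p q s φ j) : φ ⟨i, hi⟩ = φ ⟨j, hj⟩ := by
  rcases le_total i j with h | h
  · exact phi_eq_of_gfun_eq hφ h hj hg
  · exact (phi_eq_of_gfun_eq hφ h hi hg.symm).symm

lemma deltaF_sigmaF (hφ : IsWeakQSh p q s φ) (hpq : 0 < p + q) (i : Fin (p + q)) :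
    deltaF p q s φ hpq (sigmaF p q s φ i) = φ i := by
  unfold deltaF
  have hex := (deltaF_ex p q s φ hpq (sigmaF p q s φ i)).choose_spec
  have hg : gfun p q s φ (deltaF_ex p q s φ hpq (sigmaF p q s φ i)).choose
      = gfun p q s φ i.val := hex.2
  exact phi_eq_of_gfun_eq' hφ hex.1 i.isLt hg

lemma sigmaF_surj (hpq : 0 < p + q) : Function.Surjective (sigmaF p q s φ) := by
  intro v
  have hv : v.val ≤ gfun p q s φ (p + q - 1) := by
    have := v.isLt; unfold tF at this; omega
  obtain ⟨i, hi, he⟩ := gfun_attain hv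
  exact ⟨⟨i, by omega⟩, Fin.ext he⟩

lemma sigmaF_mono : Monotone (sigmaF p q s φ) := by
  intro a b hab
  exact gfun_mono (p := p) (q := q) (s := s) (φ := φ) hab

-- preimages of small values are < p, and of large values are ≥ p
lemma choose_lt_p (hp : 0 < p) (hpq : 0 < p + q) (v : Fin (tF p q s φ))
    (hv : v.val < gfun p q s φ (p - 1) + 1) :
    (deltaF_ex p q s φ hpq v).choose < p := by
  by_contra h
  have hex := (deltaF_ex p q s φ hpq v).choose_spec
  have h1 : gfun p q s φ p ≤ gfun p q s φ (deltaF_ex p q s φ hpq v).choose :=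
    gfun_mono (by omega)
  have h2 := gfun_p (q := q) (s := s) (φ := φ) hp
  omega

lemma choose_ge_p (hp : 0 < p) (hpq : 0 < p + q) (v : Fin (tF p q s φ))
    (hv : gfun p q s φ (p - 1) + 1 ≤ v.val) :
    p ≤ (deltaF_ex p q s φ hpq v).choose := by
  by_contra h
  have hex := (deltaF_ex p q s φ hpq v).choose_spec
  have h1 : gfun p q s φ (deltaF_ex p q s φ hpq v).choose ≤ gfun p q s φ (p - 1) :=
    gfun_mono (by omega)
  omega

lemma deltaF_qsh (hφ : IsWeakQSh p q s φ) (hp : 0 < p) (hq : 0 < q) :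
    IsQShCut (tF p q s φ) s (gfun p q s φ (p - 1) + 1) (deltaF p q s φ (by omega)) := by
  have hpq : 0 < p + q := by omega
  refine ⟨?_, ?_, ?_⟩
  · -- surjective
    intro w
    obtain ⟨i, hi⟩ := hφ.1 w
    exact ⟨sigmaF p q s φ i, by rw [deltaF_sigmaF hφ hpq, hi]⟩
  · -- strictly increasing on first block values
    intro v w hvw hw
    have hcv := (deltaF_ex p q s φ hpq v).choose_spec
    have hcw := (deltaF_ex p q s φ hpq w).choose_spec
    have hv1 : v.val < gfun p q s φ (p - 1) + 1 := by omega
    have hvp := choose_lt_p hp hpq v hv1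
    have hwp := choose_lt_p hp hpq w (by omega)
    have hlt : (deltaF_ex p q s φ hpq v).choose < (deltaF_ex p q s φ hpq w).choose := by
      by_contra h
      have := gfun_mono (p := p) (q := q) (s := s) (φ := φ)
        (show (deltaF_ex p q s φ hpq w).choose ≤ (deltaF_ex p q s φ hpq v).choose by omega)
      omega
    unfold deltaF
    have hle : φ ⟨(deltaF_ex p q s φ hpq v).choose, hcv.1⟩
        ≤ φ ⟨(deltaF_ex p q s φ hpq w).choose, hcw.1⟩ :=
      hφ.2.1 _ _ hlt hwp
    refine lt_of_le_of_ne hle ?_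
    intro hcontra
    have := gfun_eq_of_phi_eq_first hφ (le_of_lt hlt) hwp hcontra
    omega
  · -- strictly increasing on second block values
    intro v w hv hvw
    have hcv := (deltaF_ex p q s φ hpq v).choose_spec
    have hcw := (deltaF_ex p q s φ hpq w).choose_spec
    have hvp := choose_ge_p hp hpq v hv
    have hwp := choose_ge_p hp hpq w (by omega)
    have hlt : (deltaF_ex p q s φ hpq v).choose < (deltaF_ex p q s φ hpq w).choose := by
      by_contra h
      have := gfun_mono (p := p) (q := q) (s := s) (φ := φ)
        (show (deltaF_ex p q s φ hpq w).choose ≤ (deltaF_ex p q s φ hpq v).choose by omega)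
      omega
    unfold deltaF
    have hle : φ ⟨(deltaF_ex p q s φ hpq v).choose, hcv.1⟩
        ≤ φ ⟨(deltaF_ex p q s φ hpq w).choose, hcw.1⟩ :=
      hφ.2.2 _ _ hvp hlt
    refine lt_of_le_of_ne hle ?_
    intro hcontra
    have := gfun_eq_of_phi_eq_second hφ hvp (le_of_lt hlt) hcw.1 hcontra
    omega


lemma two_le_tF (hp : 0 < p) (hq : 0 < q) : 2 ≤ tF p q s φ := by
  have h1 := gfun_p (q := q) (s := s) (φ := φ) hp
  have h2 : gfun p q s φ p ≤ gfun p q s φ (p + q - 1) :=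
    gfun_mono (by omega)
  unfold tF; omega

lemma surj_mono_step {t' : ℕ} {σ' : Fin (p + q) → Fin t'}
    (hs : Function.Surjective σ') (hm : Monotone σ')
    {i : ℕ} (hi : i < p + q) (hi1 : i + 1 < p + q) :
    (σ' ⟨i+1, hi1⟩).val ≤ (σ' ⟨i, hi⟩).val + 1 := by
  by_contra h
  have hc : (σ' ⟨i, hi⟩).val + 1 < t' := by
    have := (σ' ⟨i+1, hi1⟩).isLt; omega
  obtain ⟨j, hj⟩ := hs ⟨(σ' ⟨i, hi⟩).val + 1, hc⟩
  rcases le_or_gt j.val i with hji | hji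
  · have : σ' j ≤ σ' ⟨i, hi⟩ := hm (Fin.le_def.mpr hji)
    rw [Fin.le_def, hj] at this
    simp at this
  · have : σ' ⟨i+1, hi1⟩ ≤ σ' j := hm (Fin.le_def.mpr (by simp; omega))
    rw [Fin.le_def, hj] at this
    simp at this
    omega

lemma sigma_zero {t' : ℕ} {σ' : Fin (p + q) → Fin t'} (ht' : 0 < t') (hpq : 0 < p + q)
    (hs : Function.Surjective σ') (hm : Monotone σ') :
    (σ' ⟨0, hpq⟩).val = 0 := by
  obtain ⟨j, hj⟩ := hs ⟨0, ht'⟩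
  have : σ' ⟨0, hpq⟩ ≤ σ' j := hm (Fin.le_def.mpr (by simp))
  rw [Fin.le_def, hj] at this
  simpa using this

lemma unique_val (hφ : IsWeakQSh p q s φ) (hp : 0 < p) (hq : 0 < q)
    {t' : ℕ} {σ' : Fin (p + q) → Fin t'} {δ' : Fin t' → Fin s}
    (ht2 : 2 ≤ t') (hs : Function.Surjective σ') (hm : Monotone σ')
    (hlt : σ' ⟨p - 1, by omega⟩ < σ' ⟨p, by omega⟩)
    (hδ : IsQShCut t' s ((σ' ⟨p - 1, by omega⟩).val + 1) δ')
    (hcomp : φ = δ' ∘ σ') :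
    ∀ i (hi : i < p + q), (σ' ⟨i, hi⟩).val = gfun p q s φ i := by
  intro i
  induction i with
  | zero =>
    intro hi
    rw [gfun_zero]
    exact sigma_zero (by omega) hi hs hm
  | succ n ih =>
    intro hi1
    have hn : n < p + q := by omega
    have ihn := ih hn
    have hstep := surj_mono_step hs hm hn hi1
    rw [gfun_succ]
    by_cases hc : n + 1 = p
    · have e1 : (⟨n+1, hi1⟩ : Fin (p + q)) = ⟨p, by omega⟩ := Fin.ext hc
      have e2 : (⟨n, hn⟩ : Fin (p + q)) = ⟨p - 1, by omega⟩ := Fin.ext (by simp; omega)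
      have hv : (σ' ⟨n, hn⟩).val < (σ' ⟨n+1, hi1⟩).val := by
        rw [e1, e2]; exact Fin.lt_def.mp hlt
      have hsf : stepF p q s φ n = 1 := by
        have h5 := stepF_p (q := q) (s := s) (φ := φ) hp
        rw [show p - 1 = n from by omega] at h5
        exact h5
      omega
    · rw [stepF_eq n hi1 hc]
      have hmle : (σ' ⟨n, hn⟩).val ≤ (σ' ⟨n+1, hi1⟩).val :=
        Fin.le_def.mp (hm (Fin.le_def.mpr (by simp)))
      have h1 : φ ⟨n, hn⟩ = δ' (σ' ⟨n, hn⟩) := by rw [hcomp]; rfl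
      have h2 : φ ⟨n+1, hi1⟩ = δ' (σ' ⟨n+1, hi1⟩) := by rw [hcomp]; rfl
      have hk : (σ' ⟨p - 1, by omega⟩).val + 1 ≤ (σ' ⟨p, by omega⟩).val :=
        Fin.lt_def.mp hlt
      by_cases heq : φ ⟨n, hn⟩ = φ ⟨n+1, hi1⟩
      · rw [if_pos heq]
        have hvv : (σ' ⟨n+1, hi1⟩).val = (σ' ⟨n, hn⟩).val := by
          by_contra hne
          have hltv : (σ' ⟨n, hn⟩).val < (σ' ⟨n+1, hi1⟩).val := by omega
          have hphi_lt : φ ⟨n, hn⟩ < φ ⟨n+1, hi1⟩ := by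
            rw [h1, h2]
            rcases lt_or_ge (n+1) p with hblk | hblk
            · refine hδ.2.1 _ _ hltv ?_
              have hle9 : σ' ⟨n+1, hi1⟩ ≤ σ' ⟨p - 1, by omega⟩ :=
                hm (Fin.le_def.mpr (by simp; omega))
              have := Fin.le_def.mp hle9
              omega
            · refine hδ.2.2 _ _ ?_ hltv
              have hpn : p ≤ n := by omega
              have hle9 : σ' ⟨p, by omega⟩ ≤ σ' ⟨n, hn⟩ :=
                hm (Fin.le_def.mpr (by simp; omega))
              have := Fin.le_def.mp hle9
              omega
          exact absurd heq (ne_of_lt hphi_lt)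
        omega
      · rw [if_neg heq]
        have hne : (σ' ⟨n, hn⟩).val ≠ (σ' ⟨n+1, hi1⟩).val := by
          intro he
          apply heq
          rw [h1, h2]
          congr 1
          exact Fin.ext he
        omega

end QShAux

/-- every weak `(p,q)`-quasi-shuffle `φ` factors uniquely as
`φ = δ ∘ σ` with `σ : {1,…,p+q} ↠ {1,…,t}` a nondecreasing surjection
satisfying `σ(p) < σ(p+1)` (so `t ≥ 2`), and `δ : {1,…,t} ↠ {1,…,s}` a
`(σ(p), t - σ(p))`-quasi-shuffle. -/
theorem weakQSh_unique_factorization (p q s : ℕ) (hp : 0 < p) (hq : 0 < q)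
    (φ : Fin (p + q) → Fin s) (hφ : IsWeakQSh p q s φ) :
    ∃! x : Σ t : ℕ, (Fin (p + q) → Fin t) × (Fin t → Fin s),
      2 ≤ x.1 ∧
      Function.Surjective x.2.1 ∧ Monotone x.2.1 ∧
      x.2.1 ⟨p - 1, by omega⟩ < x.2.1 ⟨p, by omega⟩ ∧
      IsQShCut x.1 s ((x.2.1 ⟨p - 1, by omega⟩).val + 1) x.2.2 ∧
      φ = x.2.2 ∘ x.2.1 := by

  have hpq : 0 < p + q := by omega
  refine ⟨⟨QShAux.tF p q s φ, QShAux.sigmaF p q s φ, QShAux.deltaF p q s φ hpq⟩,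
    ⟨QShAux.two_le_tF hp hq, QShAux.sigmaF_surj hpq, QShAux.sigmaF_mono, ?_, ?_, ?_⟩, ?_⟩
  · exact Fin.lt_def.mpr (by
      show QShAux.gfun p q s φ (p-1) < QShAux.gfun p q s φ p
      have := QShAux.gfun_p (q := q) (s := s) (φ := φ) hp
      omega)
  · exact QShAux.deltaF_qsh hφ hp hq
  · funext i
    exact (QShAux.deltaF_sigmaF hφ hpq i).symm
  · rintro ⟨t', σ', δ'⟩ ⟨ht2, hs, hm, hlt, hδ, hcomp⟩
    dsimp only at ht2 hs hm hlt hδ hcomp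
    have hval := QShAux.unique_val hφ hp hq ht2 hs hm hlt hδ hcomp
    have hlast : p + q - 1 < p + q := by omega
    have ht : t' = QShAux.tF p q s φ := by
      have h1 : (σ' ⟨p + q - 1, hlast⟩).val = QShAux.gfun p q s φ (p + q - 1) :=
        hval _ hlast
      obtain ⟨j, hj⟩ := hs ⟨t' - 1, by omega⟩
      have h2 : (σ' j).val ≤ (σ' ⟨p + q - 1, hlast⟩).val :=
        Fin.le_def.mp (hm (Fin.le_def.mpr (show j.val ≤ p + q - 1 by have := j.isLt; omega)))
      have h4 : (σ' j).val = t' - 1 := by rw [hj]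
      have h3 := (σ' ⟨p + q - 1, hlast⟩).isLt
      unfold QShAux.tF
      omega
    subst ht
    have hσ : σ' = QShAux.sigmaF p q s φ := by
      funext i
      exact Fin.ext (hval i.val i.isLt)
    have hδeq : δ' = QShAux.deltaF p q s φ hpq := by
      funext v
      obtain ⟨i, rfl⟩ := QShAux.sigmaF_surj hpq v
      have h1 : δ' (QShAux.sigmaF p q s φ i) = φ i := by
        rw [← hσ]
        exact (congrFun hcomp i).symm
      rw [h1]
      exact (QShAux.deltaF_sigmaF hφ hpq i).symm
    rw [hσ, hδeq]
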